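/- arXiv:2404.13496 — 5 statements merged into one kernel-verified Lean document; each statement's English description precedes it below -/
import Mathlib

section
/- Let x_0 ∈ ℝ, let n ≥ 1, let β_1, …, β_n ∈ [0,1], and let Z_1, …, Z_n be independent real random variables on a probability space (Ω, μ), each with law the standard Gaussian measure gaussianReal 0 1. Define the random variables X_0 = x_0 (constant) and X_i = √(1−β_i) · X_{i−1} + √β_i · Z_i for 1 ≤ i ≤ n. Then the law of X_n under μ is the Gaussian measure with mean √(ᾱ_n) x_0 and variance 1 − ᾱ_n, where ᾱ_n = ∏_{i=1}^{n} (1 − β_i). -/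
open MeasureTheory ProbabilityTheory Real
open scoped NNReal ENNReal

namespace ForwardNoising

lemma pdf_meas2 (m : ℝ) (v : ℝ≥0) :
    Measurable (fun p : ℝ × ℝ => gaussianPDFReal (m + p.1) v p.2) := by
  simp only [gaussianPDFReal]
  fun_prop

lemma pdf_conv (m₁ m₂ : ℝ) (v₁ v₂ : ℝ≥0) (h₁ : v₁ ≠ 0) (h₂ : v₂ ≠ 0) (z x : ℝ) :
    gaussianPDFReal m₁ v₁ x * gaussianPDFReal (m₂ + x) v₂ z
      = gaussianPDFReal (m₁ + m₂) (v₁ + v₂) z *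
        gaussianPDFReal ((v₂ * m₁ + v₁ * (z - m₂)) / (v₁ + v₂)) (v₁ * v₂ / (v₁ + v₂)) x := by
  have ha : (0:ℝ) < v₁ := lt_of_le_of_ne v₁.coe_nonneg (by exact_mod_cast h₁.symm)
  have hb : (0:ℝ) < v₂ := lt_of_le_of_ne v₂.coe_nonneg (by exact_mod_cast h₂.symm)
  have hab : (0:ℝ) < (v₁:ℝ) + v₂ := by linarith
  simp only [gaussianPDFReal, NNReal.coe_add, NNReal.coe_div, NNReal.coe_mul]
  rw [mul_mul_mul_comm, mul_mul_mul_comm (Real.sqrt (2 * π * ((v₁:ℝ) + v₂)))⁻¹]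
  congr 1
  · rw [← mul_inv, ← mul_inv, ← Real.sqrt_mul (by positivity), ← Real.sqrt_mul (by positivity)]
    congr 1
    field_simp
  · rw [← Real.exp_add, ← Real.exp_add]
    congr 1
    field_simp
    ring

lemma gaussianReal_conv (m₁ m₂ : ℝ) (v₁ v₂ : ℝ≥0) :
    Measure.conv (gaussianReal m₁ v₁) (gaussianReal m₂ v₂)
      = gaussianReal (m₁ + m₂) (v₁ + v₂) := by
  by_cases h₁ : v₁ = 0
  · subst h₁
    rw [Measure.conv, gaussianReal_zero_var, Measure.dirac_prod,
      Measure.map_map measurable_add measurable_prodMk_left]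
    have : ((fun p : ℝ × ℝ => p.1 + p.2) ∘ Prod.mk m₁) = (fun y => m₁ + y) := rfl
    rw [this, gaussianReal_map_const_add, add_comm m₂ m₁, zero_add]
  by_cases h₂ : v₂ = 0
  · subst h₂
    rw [Measure.conv, gaussianReal_zero_var, Measure.prod_dirac,
      Measure.map_map measurable_add measurable_prodMk_right]
    have : ((fun p : ℝ × ℝ => p.1 + p.2) ∘ fun x => (x, m₂)) = (fun x => x + m₂) := rfl
    rw [this, gaussianReal_map_add_const, add_zero]
  ext s hs
  set v' : ℝ≥0 := v₁ * v₂ / (v₁ + v₂) with hv'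
  have hv'0 : v' ≠ 0 := by
    simp only [hv', ne_eq, div_eq_zero_iff, mul_eq_zero]
    push_neg
    exact ⟨⟨h₁, h₂⟩, by simp [h₁, h₂]⟩
  have hK : Measurable (Function.uncurry fun x z =>
      ENNReal.ofReal (gaussianPDFReal m₁ v₁ x)
        * ENNReal.ofReal (gaussianPDFReal (m₂ + x) v₂ z)) := by
    apply Measurable.mul (f := fun p : ℝ × ℝ => ENNReal.ofReal (gaussianPDFReal m₁ v₁ p.1))
      (g := fun p : ℝ × ℝ => ENNReal.ofReal (gaussianPDFReal (m₂ + p.1) v₂ p.2))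
    · exact (((measurable_gaussianPDFReal m₁ v₁).comp measurable_fst).ennreal_ofReal)
    · exact (pdf_meas2 m₂ v₂).ennreal_ofReal
  rw [Measure.conv, Measure.map_apply measurable_add hs, Measure.prod_apply (measurable_add hs)]
  have step1 : ∀ x : ℝ, (gaussianReal m₂ v₂) (Prod.mk x ⁻¹' ((fun p : ℝ × ℝ => p.1 + p.2) ⁻¹' s))
      = ∫⁻ z in s, ENNReal.ofReal (gaussianPDFReal (m₂ + x) v₂ z) := by
    intro x
    have : Prod.mk x ⁻¹' ((fun p : ℝ × ℝ => p.1 + p.2) ⁻¹' s) = (fun y => x + y) ⁻¹' s := rfl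
    rw [this, ← Measure.map_apply (measurable_const_add x) hs, gaussianReal_map_const_add,
      gaussianReal_of_var_ne_zero _ h₂, withDensity_apply _ hs]
    rfl
  simp_rw [step1]
  rw [gaussianReal_of_var_ne_zero _ h₁,
    lintegral_withDensity_eq_lintegral_mul _ (measurable_gaussianPDF _ _)
      (Measurable.lintegral_prod_right (ν := volume.restrict s)
        (f := fun x z => ENNReal.ofReal (gaussianPDFReal (m₂ + x) v₂ z))
        ((pdf_meas2 m₂ v₂).ennreal_ofReal))]
  simp only [gaussianPDF, Pi.mul_apply]
  have step2 : (fun x => ENNReal.ofReal (gaussianPDFReal m₁ v₁ x) *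
        ∫⁻ z in s, ENNReal.ofReal (gaussianPDFReal (m₂ + x) v₂ z))
      = fun x => ∫⁻ z in s, ENNReal.ofReal (gaussianPDFReal m₁ v₁ x) *
        ENNReal.ofReal (gaussianPDFReal (m₂ + x) v₂ z) := by
    ext x
    exact (lintegral_const_mul _ (measurable_gaussianPDFReal _ _).ennreal_ofReal).symm
  rw [step2, lintegral_lintegral_swap hK.aemeasurable]
  have step3 : ∀ z : ℝ, (∫⁻ x, ENNReal.ofReal (gaussianPDFReal m₁ v₁ x) *
        ENNReal.ofReal (gaussianPDFReal (m₂ + x) v₂ z))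
      = ENNReal.ofReal (gaussianPDFReal (m₁ + m₂) (v₁ + v₂) z) := by
    intro z
    have : ∀ x : ℝ, ENNReal.ofReal (gaussianPDFReal m₁ v₁ x) *
        ENNReal.ofReal (gaussianPDFReal (m₂ + x) v₂ z)
        = ENNReal.ofReal (gaussianPDFReal (m₁ + m₂) (v₁ + v₂) z) *
          ENNReal.ofReal (gaussianPDFReal ((v₂ * m₁ + v₁ * (z - m₂)) / (v₁ + v₂)) v' x) := by
      intro x
      rw [← ENNReal.ofReal_mul (gaussianPDFReal_nonneg _ _ _),
        ← ENNReal.ofReal_mul (gaussianPDFReal_nonneg _ _ _), pdf_conv _ _ _ _ h₁ h₂]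
    simp_rw [this]
    rw [lintegral_const_mul _ (measurable_gaussianPDFReal _ _).ennreal_ofReal,
      lintegral_gaussianPDFReal_eq_one _ hv'0, mul_one]
  simp_rw [step3]
  rw [gaussianReal_of_var_ne_zero _ (by simp [h₁]), withDensity_apply _ hs]
  rfl

lemma map_add_eq_conv {Ω : Type*} [MeasurableSpace Ω] (μ : Measure Ω) [IsProbabilityMeasure μ]
    {X Y : Ω → ℝ} (hX : Measurable X) (hY : Measurable Y) (h : IndepFun X Y μ) :
    μ.map (fun ω => X ω + Y ω) = Measure.conv (μ.map X) (μ.map Y) := by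
  rw [Measure.conv,
    ← (indepFun_iff_map_prod_eq_prod_map_map hX.aemeasurable hY.aemeasurable).mp h,
    Measure.map_map measurable_add (hX.prodMk hY)]
  rfl

lemma map_const_mul {Ω : Type*} [MeasurableSpace Ω] {μ : Measure Ω} {X : Ω → ℝ} {m : ℝ} {v : ℝ≥0}
    (hX : Measurable X) (h : μ.map X = gaussianReal m v) (c : ℝ) :
    μ.map (fun ω => c * X ω) = gaussianReal (c * m) (NNReal.mk (c^2) (sq_nonneg _) * v) := by
  have : (fun ω => c * X ω) = (fun x => c * x) ∘ X := rfl
  rw [this, ← Measure.map_map (measurable_const_mul c) hX, h, gaussianReal_map_const_mul]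

noncomputable def G (x₀ : ℝ) (β : ℕ → ℝ) : ℕ → (ℕ → ℝ) → ℝ
  | 0 => fun _ => x₀
  | (k+1) => fun z => Real.sqrt (1 - β (k+1)) * G x₀ β k z + Real.sqrt (β (k+1)) * z (k+1)

lemma measurable_G (x₀ : ℝ) (β : ℕ → ℝ) : ∀ k, Measurable (G x₀ β k)
  | 0 => measurable_const
  | (k+1) => (((measurable_G x₀ β k).const_mul _).add ((measurable_pi_apply (k+1)).const_mul _))

lemma G_congr (x₀ : ℝ) (β : ℕ → ℝ) : ∀ k (z z' : ℕ → ℝ),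
    (∀ j, 1 ≤ j → j ≤ k → z j = z' j) → G x₀ β k z = G x₀ β k z'
  | 0, _, _, _ => rfl
  | (k+1), z, z', h => by
    simp only [G]
    rw [G_congr x₀ β k z z' (fun j h1 h2 => h j h1 (by omega)), h (k+1) (by omega) le_rfl]

end ForwardNoising

open ForwardNoising

/-- The transition law of the discretized forward noising process of a diffusion model:
if `X_0 = x_0` and `X_i = √(1-β_i) X_{i-1} + √(β_i) Z_i` with independent standard Gaussian
noise `Z_1, …, Z_n` and `β_i ∈ [0,1]`, then the law of `X_n` is the Gaussian with mean
`√(ᾱ_n) x_0` and variance `1 - ᾱ_n`, where `ᾱ_n = ∏_{i=1}^n (1-β_i)`. -/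
theorem law_of_forward_noising_process
    {Ω : Type*} [MeasurableSpace Ω] (μ : Measure Ω) [IsProbabilityMeasure μ]
    (x₀ : ℝ) (n : ℕ) (hn : 1 ≤ n) (β : ℕ → ℝ)
    (hβ0 : ∀ i, 1 ≤ i → i ≤ n → 0 ≤ β i) (hβ1 : ∀ i, 1 ≤ i → i ≤ n → β i ≤ 1)
    (Z : ℕ → Ω → ℝ) (hZmeas : ∀ i, Measurable (Z i))
    (hZindep : iIndepFun (m := fun _ : Fin n => (inferInstance : MeasurableSpace ℝ))
      (fun i : Fin n => Z (i + 1)) μ)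
    (hZlaw : ∀ i, 1 ≤ i → i ≤ n → Measure.map (Z i) μ = gaussianReal 0 1)
    (X : ℕ → Ω → ℝ) (hX0 : X 0 = fun _ => x₀)
    (hXrec : ∀ i, 1 ≤ i → i ≤ n →
      X i = fun ω => Real.sqrt (1 - β i) * X (i - 1) ω + Real.sqrt (β i) * Z i ω) :
    Measure.map (X n) μ =
      gaussianReal (Real.sqrt (∏ i ∈ Finset.Icc 1 n, (1 - β i)) * x₀)
        (Real.toNNReal (1 - ∏ i ∈ Finset.Icc 1 n, (1 - β i))) := by
  -- X k as a function of the noise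
  have hXG : ∀ k, k ≤ n → X k = fun ω => G x₀ β k (fun j => Z j ω) := by
    intro k
    induction k with
    | zero => intro _; exact hX0
    | succ k ih =>
      intro hk
      rw [hXrec (k+1) (by omega) hk]
      have hXk := ih (by omega)
      funext ω
      simp only [G, Nat.add_sub_cancel, hXk]
  have hXmeas : ∀ k, k ≤ n → Measurable (X k) := by
    intro k hk
    rw [hXG k hk]
    exact (measurable_G x₀ β k).comp (measurable_pi_lambda _ fun j => hZmeas j)
  -- independence of X k and Z (k+1)
  have hindep : ∀ k, k + 1 ≤ n → IndepFun (X k) (Z (k+1)) μ := by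
    intro k hk
    set S : Finset (Fin n) := Finset.univ.filter (fun i => (i : ℕ) < k) with hS
    set T : Finset (Fin n) := {⟨k, by omega⟩} with hT
    have hST : Disjoint S T := by
      simp only [Finset.disjoint_left, hS, hT, Finset.mem_filter, Finset.mem_univ, true_and,
        Finset.mem_singleton]
      intro i hi hiT
      rw [hiT] at hi
      simp at hi
    have H := hZindep.indepFun_finset S T hST (fun i => hZmeas _)
    have memS : ∀ j : ℕ, 1 ≤ j → j ≤ k → ∀ hjn : j - 1 < n, (⟨j - 1, hjn⟩ : Fin n) ∈ S := by
      intro j h1 h2 hjn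
      simp only [hS, Finset.mem_filter, Finset.mem_univ, true_and]
      omega
    have memT : (⟨k, by omega⟩ : Fin n) ∈ T := Finset.mem_singleton_self _
    set φ : ({i // i ∈ S} → ℝ) → ℝ := fun u =>
      G x₀ β k (fun j => if h : 1 ≤ j ∧ j ≤ k then u ⟨⟨j - 1, by omega⟩, memS j h.1 h.2 (by omega)⟩ else 0)
      with hφdef
    have hφ : Measurable φ := by
      apply (measurable_G x₀ β k).comp
      apply measurable_pi_lambda
      intro j
      by_cases h : 1 ≤ j ∧ j ≤ k
      · simp only [dif_pos h]
        exact measurable_pi_apply _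
      · simp only [dif_neg h]
        exact measurable_const
    set ψ : ({i // i ∈ T} → ℝ) → ℝ := fun u => u ⟨⟨k, by omega⟩, memT⟩ with hψdef
    have hψ : Measurable ψ := measurable_pi_apply _
    have H2 := H.comp hφ hψ
    have e1 : (φ ∘ fun ω (i : S) => Z (i + 1) ω) = X k := by
      funext ω
      simp only [Function.comp_apply, hφdef]
      rw [hXG k (by omega)]
      apply G_congr
      intro j h1 h2
      rw [dif_pos ⟨h1, h2⟩]
      congr 1
      omega
    have e2 : (ψ ∘ fun ω (i : T) => Z (i + 1) ω) = Z (k + 1) := rfl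
    rwa [e1, e2] at H2
  -- bounds on the partial products
  have hprod : ∀ k, k ≤ n → 0 ≤ (∏ i ∈ Finset.Icc 1 k, (1 - β i)) ∧
      (∏ i ∈ Finset.Icc 1 k, (1 - β i)) ≤ 1 := by
    intro k hk
    constructor
    · apply Finset.prod_nonneg
      intro i hi
      rw [Finset.mem_Icc] at hi
      have := hβ1 i hi.1 (by omega)
      linarith
    · apply Finset.prod_le_one
      · intro i hi
        rw [Finset.mem_Icc] at hi
        have := hβ1 i hi.1 (by omega)
        linarith
      · intro i hi
        rw [Finset.mem_Icc] at hi
        have := hβ0 i hi.1 (by omega)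
        linarith
  -- main induction
  have key : ∀ k, k ≤ n → Measure.map (X k) μ =
      gaussianReal (Real.sqrt (∏ i ∈ Finset.Icc 1 k, (1 - β i)) * x₀)
        (Real.toNNReal (1 - ∏ i ∈ Finset.Icc 1 k, (1 - β i))) := by
    intro k
    induction k with
    | zero =>
      intro _
      rw [hX0, Measure.map_const]
      simp
    | succ k ih =>
      intro hk
      have hk' : k ≤ n := by omega
      have hβ0' := hβ0 (k+1) (by omega) hk
      have hβ1' := hβ1 (k+1) (by omega) hk
      have hP := hprod k hk'
      set P := ∏ i ∈ Finset.Icc 1 k, (1 - β i) with hPdef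
      have hPsucc : (∏ i ∈ Finset.Icc 1 (k+1), (1 - β i)) = P * (1 - β (k+1)) := by
        rw [← Finset.prod_Icc_succ_top (by omega : 1 ≤ k + 1)]
      have h1 : Measure.map (fun ω => Real.sqrt (1 - β (k+1)) * X k ω) μ
          = gaussianReal (Real.sqrt (1 - β (k+1)) * (Real.sqrt P * x₀))
            (NNReal.mk (Real.sqrt (1 - β (k+1)) ^ 2) (sq_nonneg _) * Real.toNNReal (1 - P)) :=
        map_const_mul (hXmeas k hk') (ih hk') _
      have h2 : Measure.map (fun ω => Real.sqrt (β (k+1)) * Z (k+1) ω) μ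
          = gaussianReal 0 (Real.toNNReal (β (k+1))) := by
        have := map_const_mul (hZmeas (k+1)) (hZlaw (k+1) (by omega) hk) (Real.sqrt (β (k+1)))
        rw [mul_zero, mul_one] at this
        convert this using 2
        ext
        simp [Real.sq_sqrt hβ0', Real.coe_toNNReal _ hβ0']
      have hind2 : IndepFun (fun ω => Real.sqrt (1 - β (k+1)) * X k ω)
          (fun ω => Real.sqrt (β (k+1)) * Z (k+1) ω) μ :=
        (hindep k hk).comp (measurable_const_mul _) (measurable_const_mul _)
      rw [hXrec (k+1) (by omega) hk]
      simp only [Nat.add_sub_cancel]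
      rw [map_add_eq_conv μ ((hXmeas k hk').const_mul _) ((hZmeas (k+1)).const_mul _) hind2,
        h1, h2, gaussianReal_conv]
      congr 1
      · rw [add_zero, ← mul_assoc, ← Real.sqrt_mul (by linarith), hPsucc, mul_comm P]
      · ext
        push_cast
        rw [Real.sq_sqrt (by linarith), Real.coe_toNNReal _ (by linarith),
          Real.coe_toNNReal _ hβ0', Real.coe_toNNReal _ (by nlinarith [hPsucc, hP.1, hP.2]),
          hPsucc]
        ring
  exact key n le_rfl
end

section
/- Let d ≥ 1, E = EuclideanSpace ℝ (Fin d), ᾱ ∈ (0,1), and k(x_0, x) = (2π(1−ᾱ))^{−d/2} exp(−‖x − √ᾱ x_0‖²/(2(1−ᾱ))). Let p_0 : E → ℝ be measurable with p_0 ≥ 0, and fix x ∈ E. Assume: (i) the functions x_0 ↦ p_0(x_0) k(x_0, x) and x_0 ↦ p_0(x_0) k(x_0, x) · x_0 are (Bochner) integrable; (ii) p_t(x) := ∫ p_0(x_0) k(x_0, x) dx_0 > 0, where p_t(z) := ∫ p_0(x_0) k(x_0, z) dx_0; (iii) p_t has a gradient at x equal to G := ∫ p_0(x_0) · ∇_x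 k(x_0, x) dx_0 (differentiation under the integral sign holds at x, and x_0 ↦ p_0(x_0) ∇_x k(x_0,x) is integrable). Then the posterior mean x̂_0 := p_t(x)^{−1} · ∫ p_0(x_0) k(x_0, x) · x_0 dx_0 satisfies Tweedie's formula: x̂_0 = (√ᾱ)^{−1} · ( x + (1−ᾱ) · p_t(x)^{−1} · G ), i.e. x̂_0 = (x + (1−ᾱ) ∇ log p_t(x)) / √ᾱ. -/
open scoped Real
open MeasureTheory

lemma gauss_grad {d : ℕ} (C s : ℝ) (c x : EuclideanSpace ℝ (Fin d)) :
    HasGradientAt (fun y => C * Real.exp (-‖y - c‖ ^ 2 / s))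
      ((C * Real.exp (-‖x - c‖ ^ 2 / s) * (-2 / s)) • (x - c)) x := by
  have h1 : HasFDerivAt (fun y : EuclideanSpace ℝ (Fin d) => y - c)
      (ContinuousLinearMap.id ℝ _) x := (hasFDerivAt_id x).sub_const c
  have hf : HasFDerivAt (fun y : EuclideanSpace ℝ (Fin d) => (inner ℝ (y - c) (y - c) : ℝ))
      ((fderivInnerCLM ℝ (x - c, x - c)).comp ((ContinuousLinearMap.id ℝ _).prod
        (ContinuousLinearMap.id ℝ _))) x := h1.inner ℝ h1
  have hg : HasDerivAt (fun t : ℝ => C * Real.exp (-t / s))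
      (C * Real.exp (-(inner ℝ (x - c) (x - c) : ℝ) / s) * (-1 / s))
      (inner ℝ (x - c) (x - c) : ℝ) := by
    have h2 : HasDerivAt (fun t : ℝ => -t / s) (-1 / s) ((inner ℝ (x - c) (x - c) : ℝ)) := by
      simpa using ((hasDerivAt_id ((inner ℝ (x - c) (x - c) : ℝ))).neg.div_const s)
    simpa [mul_comm, mul_assoc, mul_left_comm] using (h2.exp.const_mul C)
  have hcomp := hg.comp_hasFDerivAt x hf
  rw [hasGradientAt_iff_hasFDerivAt]
  convert hcomp using 2
  · rfl
  · simp only [Function.comp_apply]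
    rw [real_inner_self_eq_norm_sq]
  · ext v
    simp only [ContinuousLinearMap.smul_apply, ContinuousLinearMap.coe_comp',
      Function.comp_apply, ContinuousLinearMap.prod_apply, ContinuousLinearMap.coe_id',
      id_eq, fderivInnerCLM_apply, InnerProductSpace.toDual_apply_apply, real_inner_smul_left,
      smul_eq_mul]
    rw [real_inner_self_eq_norm_sq, real_inner_comm v (x - c)]
    ring

/-- Tweedie's formula for the variance-preserving diffusion model: with Gaussian transition
kernel `k(x₀, x) = (2π(1−ᾱ))^{−d/2} exp(−‖x − √ᾱ x₀‖²/(2(1−ᾱ)))` and prior density `p₀ ≥ 0`,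
if `p_t(x) = ∫ p₀(x₀) k(x₀, x) dx₀ > 0` and differentiation under the integral sign holds at
`x` (the gradient of `p_t` at `x` is `G = ∫ p₀(x₀) ∇_x k(x₀, x) dx₀`), then the posterior mean
`x̂₀ = p_t(x)⁻¹ ∫ p₀(x₀) k(x₀, x) x₀ dx₀` satisfies
`x̂₀ = (x + (1−ᾱ) ∇ log p_t(x)) / √ᾱ`. -/
theorem tweedie_formula
    (d : ℕ) (hd : 1 ≤ d) (ᾱ : ℝ) (hᾱ0 : 0 < ᾱ) (hᾱ1 : ᾱ < 1)
    (k : EuclideanSpace ℝ (Fin d) → EuclideanSpace ℝ (Fin d) → ℝ)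
    (hk : ∀ x₀ x, k x₀ x = (2 * π * (1 - ᾱ)) ^ (-(d : ℝ) / 2) *
      Real.exp (-‖x - Real.sqrt ᾱ • x₀‖ ^ 2 / (2 * (1 - ᾱ))))
    (p₀ : EuclideanSpace ℝ (Fin d) → ℝ) (hp₀meas : Measurable p₀) (hp₀ : ∀ x₀, 0 ≤ p₀ x₀)
    (x : EuclideanSpace ℝ (Fin d))
    (hint₁ : Integrable (fun x₀ => p₀ x₀ * k x₀ x))
    (hint₂ : Integrable (fun x₀ => (p₀ x₀ * k x₀ x) • x₀))
    (p_t : EuclideanSpace ℝ (Fin d) → ℝ)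
    (hpt : ∀ z, p_t z = ∫ x₀, p₀ x₀ * k x₀ z)
    (hptpos : 0 < p_t x)
    (G : EuclideanSpace ℝ (Fin d))
    (hG : G = ∫ x₀, p₀ x₀ • gradient (k x₀) x)
    (hGint : Integrable (fun x₀ => p₀ x₀ • gradient (k x₀) x))
    (hgrad : HasGradientAt p_t G x) :
    (p_t x)⁻¹ • (∫ x₀, (p₀ x₀ * k x₀ x) • x₀) =
      (Real.sqrt ᾱ)⁻¹ • (x + ((1 - ᾱ) * (p_t x)⁻¹) • G) := by
  have h1ᾱ : (1 : ℝ) - ᾱ ≠ 0 := by linarith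
  have ha : Real.sqrt ᾱ ≠ 0 := ne_of_gt (Real.sqrt_pos.mpr hᾱ0)
  have hkgrad : ∀ x₀, gradient (k x₀) x =
      ((1 - ᾱ)⁻¹ * k x₀ x) • (Real.sqrt ᾱ • x₀ - x) := by
    intro x₀
    have hfun : k x₀ = fun y => (2 * π * (1 - ᾱ)) ^ (-(d : ℝ) / 2) *
        Real.exp (-‖y - Real.sqrt ᾱ • x₀‖ ^ 2 / (2 * (1 - ᾱ))) := funext (hk x₀)
    have h := gauss_grad ((2 * π * (1 - ᾱ)) ^ (-(d : ℝ) / 2)) (2 * (1 - ᾱ))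
      (Real.sqrt ᾱ • x₀) x
    rw [hfun, h.gradient, ← hk x₀ x,
      show k x₀ x * (-2 / (2 * (1 - ᾱ))) = -((1 - ᾱ)⁻¹ * k x₀ x) by
        field_simp,
      neg_smul, ← smul_neg, neg_sub]
    simp only [hk]
  have hGval : G = (1 - ᾱ)⁻¹ • ((Real.sqrt ᾱ) • (∫ x₀, (p₀ x₀ * k x₀ x) • x₀)
      - (p_t x) • x) := by
    rw [hG]
    have heq : ∀ x₀, p₀ x₀ • gradient (k x₀) x =
        (1 - ᾱ)⁻¹ • ((Real.sqrt ᾱ) • ((p₀ x₀ * k x₀ x) • x₀) - (p₀ x₀ * k x₀ x) • x) := by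
      intro x₀
      rw [hkgrad x₀]
      module
    simp_rw [heq]
    have hintA : Integrable (fun x₀ => Real.sqrt ᾱ • ((p₀ x₀ * k x₀ x) • x₀)) :=
      hint₂.smul (Real.sqrt ᾱ)
    rw [integral_smul, integral_sub hintA (hint₁.smul_const x),
      integral_smul, integral_smul_const, ← hpt x]
  rw [hGval]
  have hp : p_t x ≠ 0 := ne_of_gt hptpos
  match_scalars <;> field_simp <;> ring
end

section
/- Let (Ω, 𝓕, μ) be a probability space, let β, γ, δ be nonempty standard Borel measurable spaces, and let X_t : Ω → β, X_0 : Ω → γ, Y : Ω → δ be measurable random variables. Assume Y and X_t are conditionally independent given X_0 (conditional independence of the pair of functions given the σ-algebra generated by X_0). Then for μ-almost every ω, the conditional distribution of Y given X_t evaluated at X_t(ω) equals the composition of kernels: (condDistrib Y X_t μ)(X_t(ω)) = ((condDistrib X_0 X_t μ) ∘ₖ (condDistrib Y X_0 μ))(X_t(ω)); that is, the conditional law of Y given X_t is obtained by first drawing X_0 from its conditional law given X_t and then drawing Y from its conditional law given X_0. -/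
open MeasureTheory ProbabilityTheory Set

/-- Disintegration identity behind diffusion posterior sampling: if the observation `Y` and the
diffused state `X_t` are conditionally independent given the clean state `X₀`, then almost
surely the conditional law of `Y` given `X_t` is obtained by first drawing `X₀` from its
conditional law given `X_t` and then drawing `Y` from its conditional law given `X₀`:
`condDistrib Y X_t μ (X_t ω) = (condDistrib Y X₀ μ ∘ₖ condDistrib X₀ X_t μ) (X_t ω)`. -/
theorem condDistrib_eq_comp_of_condIndepFun
    {Ω β γ δ : Type*} [MeasurableSpace Ω] [StandardBorelSpace Ω]
    [MeasurableSpace β] [StandardBorelSpace β] [Nonempty β]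
    [MeasurableSpace γ] [StandardBorelSpace γ] [Nonempty γ]
    [MeasurableSpace δ] [StandardBorelSpace δ] [Nonempty δ]
    (μ : Measure Ω) [IsProbabilityMeasure μ]
    (X_t : Ω → β) (X₀ : Ω → γ) (Y : Ω → δ)
    (hXt : Measurable X_t) (hX₀ : Measurable X₀) (hY : Measurable Y)
    (hci : CondIndepFun (MeasurableSpace.comap X₀ inferInstance) hX₀.comap_le Y X_t μ) :
    ∀ᵐ ω ∂μ, condDistrib Y X_t μ (X_t ω) =
      (condDistrib Y X₀ μ ∘ₖ condDistrib X₀ X_t μ) (X_t ω) := by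
  set ν := μ.map X_t with hν
  set κ := condDistrib X₀ X_t μ with hκ
  set η := condDistrib Y X₀ μ with hη
  -- disintegration of the joint law of (X_t, X₀)
  have hfactA : μ.map (fun ω => (X_t ω, X₀ ω)) = ν ⊗ₘ κ := by
    rw [hκ, condDistrib, hν, ← Measure.fst_map_prodMk hX₀ (X := X_t),
      Measure.disintegrate _ _]
  -- conditional independence in conditional-expectation form
  have hciCE := (condIndepFun_iff_condExp_inter_preimage_eq_mul (m' := MeasurableSpace.comap X₀ inferInstance)
      (hm' := hX₀.comap_le) hY hXt).mp hci
  -- key compProd identity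
  have hkey : μ.map (fun ω => (X_t ω, Y ω)) = ν ⊗ₘ (η ∘ₖ κ) := by
    refine ext_of_generate_finite _ generateFrom_prod.symm isPiSystem_prod ?_ ?_
    · rintro _ ⟨s, hs, t, ht, rfl⟩
      simp only [Set.mem_setOf_eq] at hs ht
      have hA : MeasurableSet (X_t ⁻¹' s) := hXt hs
      have hB : MeasurableSet (Y ⁻¹' t) := hY ht
      -- rewrite RHS as a lintegral over the preimage
      have hR : (ν ⊗ₘ (η ∘ₖ κ)) (s ×ˢ t) = ∫⁻ ω in X_t ⁻¹' s, η (X₀ ω) t ∂μ := by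
        rw [Measure.compProd_apply_prod hs ht]
        have h1 : ∀ b, (η ∘ₖ κ) b t = ∫⁻ c, η c t ∂κ b := fun b =>
          Kernel.comp_apply' η κ b ht
        simp_rw [h1]
        have h2 : ∫⁻ p in s ×ˢ (univ : Set γ), (fun p : β × γ => η p.2 t) p ∂(ν ⊗ₘ κ)
            = ∫⁻ b in s, ∫⁻ c, η c t ∂κ b ∂ν := by
          rw [Measure.setLIntegral_compProd (f := fun p : β × γ => η p.2 t)
            ((Kernel.measurable_coe η ht).comp measurable_snd) hs MeasurableSet.univ]
          simp
        rw [← h2, ← hfactA,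
          setLIntegral_map (f := fun p : β × γ => η p.2 t) (hs.prod MeasurableSet.univ)
            ((Kernel.measurable_coe η ht).comp measurable_snd) (hXt.prodMk hX₀)]
        have hpre : (fun ω => (X_t ω, X₀ ω)) ⁻¹' (s ×ˢ (univ : Set γ)) = X_t ⁻¹' s := by
          ext ω; simp
        rw [hpre]
      rw [hR, Measure.map_apply (hXt.prodMk hY) (hs.prod ht), mk_preimage_prod]
      -- now the probabilistic core via conditional expectations
      have hle : ∫⁻ ω in X_t ⁻¹' s, η (X₀ ω) t ∂μ ≤ 1 := by
        calc ∫⁻ ω in X_t ⁻¹' s, η (X₀ ω) t ∂μ ≤ ∫⁻ _ in X_t ⁻¹' s, 1 ∂μ :=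
              lintegral_mono fun ω => prob_le_one
          _ ≤ 1 := by simp [prob_le_one]
      have hmeas : Measurable fun ω => η (X₀ ω) t :=
        (Kernel.measurable_coe η ht).comp hX₀
      have hlt : ∀ᵐ ω ∂μ.restrict (X_t ⁻¹' s), η (X₀ ω) t < ⊤ :=
        Filter.Eventually.of_forall fun ω => measure_lt_top _ _
      -- toReal of the lintegral
      have htR : (∫⁻ ω in X_t ⁻¹' s, η (X₀ ω) t ∂μ).toReal
          = ∫ ω in X_t ⁻¹' s, (η (X₀ ω) t).toReal ∂μ :=
        (integral_toReal hmeas.aemeasurable hlt).symm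
      have hce : (fun ω => (η (X₀ ω) t).toReal) =ᵐ[μ] μ⟦Y ⁻¹' t | (MeasurableSpace.comap X₀ inferInstance)⟧ :=
        condDistrib_ae_eq_condExp hX₀ hY ht
      have hstep1 : ∫ ω in X_t ⁻¹' s, (η (X₀ ω) t).toReal ∂μ
          = ∫ ω in X_t ⁻¹' s, (μ⟦Y ⁻¹' t | (MeasurableSpace.comap X₀ inferInstance)⟧) ω ∂μ :=
        setIntegral_congr_ae hA (hce.mono fun ω h _ => h)
      set g := μ⟦Y ⁻¹' t | (MeasurableSpace.comap X₀ inferInstance)⟧ with hg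
      have hind : ∫ ω in X_t ⁻¹' s, g ω ∂μ
          = ∫ ω, (g * (X_t ⁻¹' s).indicator (fun _ => (1:ℝ))) ω ∂μ := by
        rw [← integral_indicator hA]
        congr 1
        ext ω
        by_cases hω : ω ∈ X_t ⁻¹' s <;> simp [hω]
      have hgmeas : AEStronglyMeasurable[MeasurableSpace.comap X₀ inferInstance] g μ :=
        stronglyMeasurable_condExp.aestronglyMeasurable
      have hindInt : Integrable ((X_t ⁻¹' s).indicator (fun _ => (1:ℝ))) μ :=
        (integrable_const 1).indicator hA
      have hprodInt : Integrable (g * (X_t ⁻¹' s).indicator (fun _ => (1:ℝ))) μ := by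
        refine Integrable.mono (integrable_condExp : Integrable g μ) ?_ ?_
        · exact (stronglyMeasurable_condExp.mono hX₀.comap_le).aestronglyMeasurable.mul
            hindInt.1
        · refine Filter.Eventually.of_forall fun ω => ?_
          simp only [Pi.mul_apply, norm_mul]
          by_cases hω : ω ∈ X_t ⁻¹' s <;> simp [hω, abs_nonneg, hg]
      have hpull : μ[g * (X_t ⁻¹' s).indicator (fun _ => (1:ℝ)) | (MeasurableSpace.comap X₀ inferInstance)]
          =ᵐ[μ] g * μ⟦X_t ⁻¹' s | (MeasurableSpace.comap X₀ inferInstance)⟧ :=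
        condExp_mul_of_aestronglyMeasurable_left hgmeas hprodInt hindInt
      have hint1 : ∫ ω, (g * (X_t ⁻¹' s).indicator (fun _ => (1:ℝ))) ω ∂μ
          = ∫ ω, (g * μ⟦X_t ⁻¹' s | (MeasurableSpace.comap X₀ inferInstance)⟧) ω ∂μ := by
        rw [← integral_condExp hX₀.comap_le]
        exact integral_congr_ae hpull
      have hint2 : ∫ ω, (g * μ⟦X_t ⁻¹' s | (MeasurableSpace.comap X₀ inferInstance)⟧) ω ∂μ
          = ∫ ω, (μ⟦Y ⁻¹' t ∩ X_t ⁻¹' s | (MeasurableSpace.comap X₀ inferInstance)⟧) ω ∂μ := by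
        refine (integral_congr_ae ?_).symm
        exact (hciCE t s ht hs).mono fun ω h => by simpa [hg] using h
      have hint3 : ∫ ω, (μ⟦Y ⁻¹' t ∩ X_t ⁻¹' s | (MeasurableSpace.comap X₀ inferInstance)⟧) ω ∂μ
          = (μ (X_t ⁻¹' s ∩ Y ⁻¹' t)).toReal := by
        rw [integral_condExp hX₀.comap_le, integral_indicator_const _ (hB.inter hA)]
        simp [Set.inter_comm, measureReal_def]
      have hfin1 : μ (X_t ⁻¹' s ∩ Y ⁻¹' t) ≠ ⊤ := measure_ne_top _ _
      have hfin2 : ∫⁻ ω in X_t ⁻¹' s, η (X₀ ω) t ∂μ ≠ ⊤ := (lt_of_le_of_lt hle ENNReal.one_lt_top).ne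
      refine ((ENNReal.toReal_eq_toReal_iff' hfin2 hfin1).mp ?_).symm
      rw [htR, hstep1, hind, hint1, hint2, hint3]
    · rw [Measure.map_apply (hXt.prodMk hY) MeasurableSet.univ]
      simp [hν, Measure.map_apply hXt MeasurableSet.univ]
  have h1 := condDistrib_ae_eq_of_measure_eq_compProd_of_measurable hXt hY hkey
  have h2 := ae_of_ae_map hXt.aemeasurable h1
  filter_upwards [h2] with ω hω using hω
end

section
/- Let n ≥ 1 and E = EuclideanSpace ℝ (Fin n). Let p_0 : E → ℝ be measurable with p_0 ≥ 0, let k : E → E → ℝ satisfy k(x_0, x) > 0 for all x_0, x, and define the mixture density p_t(x) := ∫ p_0(x_0) k(x_0, x) dx_0. Let s : E → E be measurable. Assume: (i) for every x, p_t(x) > 0, the map x_0 ↦ p_0(x_0) k(x_0, x) is integrable, and for every x_0 the map z ↦ k(x_0, z) is differentiable at x; (ii) for every x, p_t has a gradient at x equal to ∫ p_0(x_0) · ∇_x k(x_0, x) dx_0, with x_0 ↦ p_0(x_0) ∇_x k(x_0, x) integrable (differentiation under the integral sign); (iii) the function (x_0, x) ↦ p_0(x_0) k(x_0, x) ⟨s(x),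 ∇_x log k(x_0, x)⟩ is integrable on E × E, where ∇_x log k(x_0, x) := k(x_0, x)^{−1} ∇_x k(x_0, x), and x ↦ p_t(x) ⟨s(x), ∇ log p_t(x)⟩ is integrable, where ∇ log p_t(x) := p_t(x)^{−1} ∇p_t(x). Then ∫ p_t(x) ⟨s(x), ∇ log p_t(x)⟩ dx = ∫ ( ∫ p_0(x_0) k(x_0, x) ⟨s(x), ∇_x log k(x_0, x)⟩ dx_0 ) dx. -/
open MeasureTheory
open scoped RealInnerProductSpace

/-- The cross-term identity `S₁(θ) = S₂(θ)` in the proof of equivalence of explicit and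
denoising score matching: for a mixture density `p_t(x) = ∫ p₀(x₀) k(x₀, x) dx₀` with positive
transition densities `k(x₀, ·)` and a candidate score model `s`,
`∫ p_t(x) ⟨s(x), ∇ log p_t(x)⟩ dx = ∫∫ p₀(x₀) k(x₀, x) ⟨s(x), ∇_x log k(x₀, x)⟩ dx₀ dx`. -/
theorem score_matching_cross_term
    (n : ℕ) (hn : 1 ≤ n)
    (p₀ : EuclideanSpace ℝ (Fin n) → ℝ) (hp₀meas : Measurable p₀) (hp₀ : ∀ x₀, 0 ≤ p₀ x₀)
    (k : EuclideanSpace ℝ (Fin n) → EuclideanSpace ℝ (Fin n) → ℝ)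
    (hkpos : ∀ x₀ x, 0 < k x₀ x)
    (p_t : EuclideanSpace ℝ (Fin n) → ℝ)
    (hpt : ∀ x, p_t x = ∫ x₀, p₀ x₀ * k x₀ x)
    (s : EuclideanSpace ℝ (Fin n) → EuclideanSpace ℝ (Fin n)) (hs : Measurable s)
    -- (i)
    (hptpos : ∀ x, 0 < p_t x)
    (hint : ∀ x, Integrable (fun x₀ => p₀ x₀ * k x₀ x))
    (hkdiff : ∀ x₀ x, DifferentiableAt ℝ (k x₀) x)
    -- (ii) differentiation under the integral sign
    (hgradint : ∀ x, Integrable (fun x₀ => p₀ x₀ • gradient (k x₀) x))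
    (hgrad : ∀ x, HasGradientAt p_t (∫ x₀, p₀ x₀ • gradient (k x₀) x) x)
    -- (iii)
    (hprodint : Integrable (fun q : EuclideanSpace ℝ (Fin n) × EuclideanSpace ℝ (Fin n) =>
      p₀ q.1 * k q.1 q.2 * ⟪s q.2, (k q.1 q.2)⁻¹ • gradient (k q.1) q.2⟫))
    (hmargint : Integrable (fun x => p_t x * ⟪s x, (p_t x)⁻¹ • gradient p_t x⟫)) :
    ∫ x, p_t x * ⟪s x, (p_t x)⁻¹ • gradient p_t x⟫ =
      ∫ x, ∫ x₀, p₀ x₀ * k x₀ x * ⟪s x, (k x₀ x)⁻¹ • gradient (k x₀) x⟫ := by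

  have key : ∀ x, p_t x * ⟪s x, (p_t x)⁻¹ • gradient p_t x⟫ =
      ∫ x₀, p₀ x₀ * k x₀ x * ⟪s x, (k x₀ x)⁻¹ • gradient (k x₀) x⟫ := by
    intro x
    have hptne : p_t x ≠ 0 := (hptpos x).ne'
    have hgradeq : gradient p_t x = ∫ x₀, p₀ x₀ • gradient (k x₀) x := (hgrad x).gradient
    have h1 : p_t x * ⟪s x, (p_t x)⁻¹ • gradient p_t x⟫ = ⟪s x, gradient p_t x⟫ := by
      rw [real_inner_smul_right]; field_simp
    rw [h1, hgradeq, ← integral_inner (hgradint x) (s x)]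
    refine integral_congr_ae (Filter.Eventually.of_forall fun x₀ => ?_)
    have hkne : k x₀ x ≠ 0 := (hkpos x₀ x).ne'
    simp only [real_inner_smul_right]
    field_simp
  exact integral_congr_ae (Filter.Eventually.of_forall key)
end

section
/- Let n ≥ 1 and E = EuclideanSpace ℝ (Fin n). Let p_0 : E → ℝ be measurable with p_0 ≥ 0, let k : E → E → ℝ satisfy k(x_0, x) > 0 for all x_0, x, and define the mixture density p_t(x) := ∫ p_0(x_0) k(x_0, x) dx_0. Let s : E → E be measurable, and set ∇_x log k(x_0, x) := k(x_0, x)^{−1} ∇_x k(x_0, x) and ∇ log p_t(x) := p_t(x)^{−1} ∇p_t(x). Assume the hypotheses: (i) for every x, p_t(x) > 0, x_0 ↦ p_0(x_0) k(x_0, x) is integrable, and z ↦ k(x_0, z) is differentiable at x for each x_0; (ii) for every x, p_t has gradient at x equal to ∫ p_0(x_0) ∇_x k(x_0, x) dx_0 with the integrand integrable; (iii) the functions x ↦ p_t(x)‖s(x) − ∇ log p_t(x)‖², x ↦ p_t(x)‖∇ log p_t(x)‖², and x ↦ p_t(x)‖s(x)‖² are integrable, and the functions (x_0, x) ↦ p_0(x_0)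 k(x_0, x)‖s(x) − ∇_x log k(x_0, x)‖², (x_0, x) ↦ p_0(x_0) k(x_0, x)‖∇_x log k(x_0, x)‖², and (x_0, x) ↦ p_0(x_0) k(x_0, x)‖s(x)‖², as well as (x_0, x) ↦ p_0(x_0) k(x_0, x) ⟨s(x), ∇_x log k(x_0, x)⟩, are integrable on E × E. Define Ĵ_1(s) := ∫ p_t(x)‖s(x) − ∇ log p_t(x)‖² dx, Ĵ_2(s) := ∫∫ p_0(x_0) k(x_0, x)‖s(x) − ∇_x log k(x_0, x)‖² dx_0 dx, C_1 := ∫ p_t(x)‖∇ log p_t(x)‖² dx, and C_2 := ∫∫ p_0(x_0) k(x_0, x)‖∇_x log k(x_0, x)‖² dx_0 dx. Then Ĵ_1(s) − Ĵ_2(s) = C_1 − C_2; in particular, since C_1 and C_2 do not depend on s, the two score-matching objectives Ĵ_1 and Ĵ_2 differ by a constant and have the same minimizers. -/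
open MeasureTheory
open scoped RealInnerProductSpace

/-- Equivalence of explicit and denoising score matching (`J₂ = J₁ − C₁ + C₂`): under the
stated integrability and differentiation-under-the-integral assumptions, the explicit score
matching objective `Ĵ₁(s) = ∫ p_t ‖s − ∇ log p_t‖²` and the denoising score matching objective
`Ĵ₂(s) = ∫∫ p₀ k ‖s − ∇ log k‖²` satisfy `Ĵ₁(s) − Ĵ₂(s) = C₁ − C₂`, where
`C₁ = ∫ p_t ‖∇ log p_t‖²` and `C₂ = ∫∫ p₀ k ‖∇ log k‖²` do not depend on `s`. -/
theorem denoising_score_matching_equiv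
    (n : ℕ) (hn : 1 ≤ n)
    (p₀ : EuclideanSpace ℝ (Fin n) → ℝ) (hp₀meas : Measurable p₀) (hp₀ : ∀ x₀, 0 ≤ p₀ x₀)
    (k : EuclideanSpace ℝ (Fin n) → EuclideanSpace ℝ (Fin n) → ℝ)
    (hkpos : ∀ x₀ x, 0 < k x₀ x)
    (p_t : EuclideanSpace ℝ (Fin n) → ℝ)
    (hpt : ∀ x, p_t x = ∫ x₀, p₀ x₀ * k x₀ x)
    (s : EuclideanSpace ℝ (Fin n) → EuclideanSpace ℝ (Fin n)) (hs : Measurable s)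
    -- (i)
    (hptpos : ∀ x, 0 < p_t x)
    (hint : ∀ x, Integrable (fun x₀ => p₀ x₀ * k x₀ x))
    (hkdiff : ∀ x₀ x, DifferentiableAt ℝ (k x₀) x)
    -- (ii) differentiation under the integral sign
    (hgradint : ∀ x, Integrable (fun x₀ => p₀ x₀ • gradient (k x₀) x))
    (hgrad : ∀ x, HasGradientAt p_t (∫ x₀, p₀ x₀ • gradient (k x₀) x) x)
    -- (iii) integrability of all objective integrands
    (hJ₁int : Integrable (fun x => p_t x * ‖s x - (p_t x)⁻¹ • gradient p_t x‖ ^ 2))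
    (hC₁int : Integrable (fun x => p_t x * ‖(p_t x)⁻¹ • gradient p_t x‖ ^ 2))
    (hsint : Integrable (fun x => p_t x * ‖s x‖ ^ 2))
    (hJ₂int : Integrable (fun q : EuclideanSpace ℝ (Fin n) × EuclideanSpace ℝ (Fin n) =>
      p₀ q.1 * k q.1 q.2 * ‖s q.2 - (k q.1 q.2)⁻¹ • gradient (k q.1) q.2‖ ^ 2))
    (hC₂int : Integrable (fun q : EuclideanSpace ℝ (Fin n) × EuclideanSpace ℝ (Fin n) =>
      p₀ q.1 * k q.1 q.2 * ‖(k q.1 q.2)⁻¹ • gradient (k q.1) q.2‖ ^ 2))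
    (hsint₂ : Integrable (fun q : EuclideanSpace ℝ (Fin n) × EuclideanSpace ℝ (Fin n) =>
      p₀ q.1 * k q.1 q.2 * ‖s q.2‖ ^ 2))
    (hcrossint : Integrable (fun q : EuclideanSpace ℝ (Fin n) × EuclideanSpace ℝ (Fin n) =>
      p₀ q.1 * k q.1 q.2 * ⟪s q.2, (k q.1 q.2)⁻¹ • gradient (k q.1) q.2⟫)) :
    (∫ x, p_t x * ‖s x - (p_t x)⁻¹ • gradient p_t x‖ ^ 2) -
        (∫ x, ∫ x₀, p₀ x₀ * k x₀ x * ‖s x - (k x₀ x)⁻¹ • gradient (k x₀) x‖ ^ 2) =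
      (∫ x, p_t x * ‖(p_t x)⁻¹ • gradient p_t x‖ ^ 2) -
        (∫ x, ∫ x₀, p₀ x₀ * k x₀ x * ‖(k x₀ x)⁻¹ • gradient (k x₀) x‖ ^ 2) := by
  classical
  -- gradient of p_t
  have hgradeq : ∀ x, gradient p_t x = ∫ x₀, p₀ x₀ • gradient (k x₀) x :=
    fun x => (hgrad x).gradient
  -- pointwise identity for the marginal side
  have h1 : ∀ x, p_t x * ‖s x - (p_t x)⁻¹ • gradient p_t x‖ ^ 2
      - p_t x * ‖(p_t x)⁻¹ • gradient p_t x‖ ^ 2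
      = p_t x * ‖s x‖ ^ 2 - 2 * ⟪s x, gradient p_t x⟫ := by
    intro x
    have hne : p_t x ≠ 0 := (hptpos x).ne'
    rw [norm_sub_sq_real, real_inner_smul_right]
    field_simp
    ring
  -- pointwise identity for the joint side
  have h2 : ∀ q : EuclideanSpace ℝ (Fin n) × EuclideanSpace ℝ (Fin n),
      p₀ q.1 * k q.1 q.2 * ‖s q.2 - (k q.1 q.2)⁻¹ • gradient (k q.1) q.2‖ ^ 2
      - p₀ q.1 * k q.1 q.2 * ‖(k q.1 q.2)⁻¹ • gradient (k q.1) q.2‖ ^ 2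
      = p₀ q.1 * k q.1 q.2 * ‖s q.2‖ ^ 2
        - 2 * ⟪s q.2, p₀ q.1 • gradient (k q.1) q.2⟫ := by
    intro q
    have hne : k q.1 q.2 ≠ 0 := (hkpos q.1 q.2).ne'
    rw [norm_sub_sq_real, real_inner_smul_right, real_inner_smul_right]
    field_simp
    ring
  -- the common middle term, computed pointwise on the joint side
  have hmid : ∀ x, (∫ x₀, (p₀ x₀ * k x₀ x * ‖s x‖ ^ 2
        - 2 * ⟪s x, p₀ x₀ • gradient (k x₀) x⟫))
      = p_t x * ‖s x‖ ^ 2 - 2 * ⟪s x, gradient p_t x⟫ := by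
    intro x
    have hi1 : Integrable (fun x₀ => p₀ x₀ * k x₀ x * ‖s x‖ ^ 2) :=
      (hint x).mul_const _
    have hi2 : Integrable (fun x₀ => ⟪s x, p₀ x₀ • gradient (k x₀) x⟫) :=
      (hgradint x).const_inner (s x)
    rw [integral_sub hi1 (hi2.const_mul 2), integral_mul_const, integral_const_mul,
      ← hpt x, hgradeq x]
    congr 1
    congr 1
    exact ((innerSL ℝ (s x)).integral_comp_comm (hgradint x))
  -- left-hand side difference
  have hL : (∫ x, p_t x * ‖s x - (p_t x)⁻¹ • gradient p_t x‖ ^ 2) -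
      (∫ x, p_t x * ‖(p_t x)⁻¹ • gradient p_t x‖ ^ 2)
      = ∫ x, (p_t x * ‖s x‖ ^ 2 - 2 * ⟪s x, gradient p_t x⟫) := by
    rw [← integral_sub hJ₁int hC₁int]
    exact integral_congr_ae (Filter.Eventually.of_forall h1)
  -- right-hand side difference via Fubini
  have hprodvol : (volume : Measure (EuclideanSpace ℝ (Fin n) × EuclideanSpace ℝ (Fin n)))
      = (volume : Measure (EuclideanSpace ℝ (Fin n))).prod volume := Measure.volume_eq_prod _ _
  rw [hprodvol] at hJ₂int hC₂int
  have hdiffint : Integrable (fun q : EuclideanSpace ℝ (Fin n) × EuclideanSpace ℝ (Fin n) =>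
      p₀ q.1 * k q.1 q.2 * ‖s q.2‖ ^ 2 - 2 * ⟪s q.2, p₀ q.1 • gradient (k q.1) q.2⟫)
      ((volume : Measure (EuclideanSpace ℝ (Fin n))).prod volume) :=
    (hJ₂int.sub hC₂int).congr (Filter.Eventually.of_forall h2)
  have hR : (∫ x, ∫ x₀, p₀ x₀ * k x₀ x * ‖s x - (k x₀ x)⁻¹ • gradient (k x₀) x‖ ^ 2) -
      (∫ x, ∫ x₀, p₀ x₀ * k x₀ x * ‖(k x₀ x)⁻¹ • gradient (k x₀) x‖ ^ 2)
      = ∫ x, (p_t x * ‖s x‖ ^ 2 - 2 * ⟪s x, gradient p_t x⟫) := by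
    have e1 : (∫ x, ∫ x₀, p₀ x₀ * k x₀ x * ‖s x - (k x₀ x)⁻¹ • gradient (k x₀) x‖ ^ 2)
        = ∫ q, (p₀ q.1 * k q.1 q.2 * ‖s q.2 - (k q.1 q.2)⁻¹ • gradient (k q.1) q.2‖ ^ 2)
            ∂((volume : Measure (EuclideanSpace ℝ (Fin n))).prod volume) :=
      (integral_prod_symm _ hJ₂int).symm
    have e2 : (∫ x, ∫ x₀, p₀ x₀ * k x₀ x * ‖(k x₀ x)⁻¹ • gradient (k x₀) x‖ ^ 2)
        = ∫ q, (p₀ q.1 * k q.1 q.2 * ‖(k q.1 q.2)⁻¹ • gradient (k q.1) q.2‖ ^ 2)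
            ∂((volume : Measure (EuclideanSpace ℝ (Fin n))).prod volume) :=
      (integral_prod_symm _ hC₂int).symm
    rw [e1, e2, ← integral_sub hJ₂int hC₂int]
    have e3 : (∫ q, (p₀ q.1 * k q.1 q.2 * ‖s q.2 - (k q.1 q.2)⁻¹ • gradient (k q.1) q.2‖ ^ 2
          - p₀ q.1 * k q.1 q.2 * ‖(k q.1 q.2)⁻¹ • gradient (k q.1) q.2‖ ^ 2)
            ∂((volume : Measure (EuclideanSpace ℝ (Fin n))).prod volume))
        = ∫ q, (p₀ q.1 * k q.1 q.2 * ‖s q.2‖ ^ 2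
            - 2 * ⟪s q.2, p₀ q.1 • gradient (k q.1) q.2⟫)
            ∂((volume : Measure (EuclideanSpace ℝ (Fin n))).prod volume) :=
      integral_congr_ae (Filter.Eventually.of_forall h2)
    rw [e3, integral_prod_symm _ hdiffint]
    exact integral_congr_ae (Filter.Eventually.of_forall hmid)
  linarith [hL, hR]
end
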